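/- Let t ≥ 4 be an integer and let G be a finite simple graph containing a copy of H_t as a subgraph. Then the K_{2,t}-bootstrap closure Ĝ of G contains a copy of K_{t−1,t−1} as a subgraph. -/

import Mathlib

/-- `G` contains a copy of `H` as a subgraph. -/
def HasCopy {W V : Type*} (H : SimpleGraph W) (G : SimpleGraph V) : Prop :=
  ∃ f : W → V, Function.Injective f ∧ ∀ ⦃a b : W⦄, H.Adj a b → G.Adj (f a) (f b)

/-- Adding the edge `{x, y}` to `G` creates a new copy of `H` containing that edge. -/
def CreatesCopy {W V : Type*} (H : SimpleGraph W) (G : SimpleGraph V) (x y : V) : Prop :=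
  ∃ f : W → V, Function.Injective f ∧
    (∀ ⦃a b : W⦄, H.Adj a b →
      G.Adj (f a) (f b) ∨ (f a = x ∧ f b = y) ∨ (f a = y ∧ f b = x)) ∧
    ∃ a b : W, H.Adj a b ∧ ((f a = x ∧ f b = y) ∨ (f a = y ∧ f b = x))

/-- One step of the `H`-bootstrap process: add to `G` all non-edges whose addition
creates a new copy of `H` containing them. -/
def bootStep {W V : Type*} (H : SimpleGraph W) (G : SimpleGraph V) : SimpleGraph V where
  Adj x y := G.Adj x y ∨ (¬ G.Adj x y ∧ x ≠ y ∧ CreatesCopy H G x y)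
  symm := by
    constructor
    intro x y h
    rcases h with h | ⟨hn, hne, f, hf, hmap, a, b, hab, hor⟩
    · exact Or.inl h.symm
    · exact Or.inr ⟨fun h' => hn h'.symm, hne.symm, f, hf,
        fun a b hab => by have := hmap hab; tauto, a, b, hab, hor.symm⟩
  loopless := by
    constructor
    intro x h
    rcases h with h | ⟨_, hne, _⟩
    · exact G.loopless.irrefl x h
    · exact hne rfl

def bootSeq {W V : Type*} (H : SimpleGraph W) (G : SimpleGraph V) : ℕ → SimpleGraph V
  | 0 => G
  | n + 1 => bootStep H (bootSeq H G n)

/-- The `H`-bootstrap closure of `G`: the union of the iterated bootstrap steps. -/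
def bootClosure {W V : Type*} (H : SimpleGraph W) (G : SimpleGraph V) : SimpleGraph V :=
  ⨆ n, bootSeq H G n

/-- `G` percolates in the `H`-bootstrap process, i.e. its closure is complete. -/
def Percolates {W V : Type*} (H : SimpleGraph W) (G : SimpleGraph V) : Prop :=
  bootClosure H G = ⊤

abbrev GVert (r s : ℕ) := Unit ⊕ Fin s ⊕ Fin s × Fin r

def GRel (r s : ℕ) : GVert r s → GVert r s → Prop := fun a b =>
  match a, b with
  | Sum.inl _, Sum.inr (Sum.inr _) => True
  | Sum.inr (Sum.inl i), Sum.inr (Sum.inr p) => p.1 = i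
  | _, _ => False

/-- The graph `G_r(u; u_1, …, u_s)`: `s` copies of `K_{2,r}`, where `{u_i, u_i'}` is the
part of size 2 of the `i`-th copy, glued by identifying all `u_i'` to one vertex `u`.
Here `Sum.inl ()` is `u`, `Sum.inr (Sum.inl i)` is `u_i`, and `Sum.inr (Sum.inr (i, j))`
is the `j`-th vertex of the part of size `r` in the `i`-th copy. -/
def GStar (r s : ℕ) : SimpleGraph (GVert r s) := SimpleGraph.fromRel (GRel r s)

def htr (t : ℕ) : ℕ := (t - 1) / 2
def hts (t : ℕ) : ℕ := t - 1 - htr t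

abbrev HtV (t : ℕ) :=
  GVert (t - 1) (htr t) ⊕ GVert (hts t - 1) (hts t) ⊕ GVert (htr t - 1) (t - 2)

/-- For `r = ⌊(t-1)/2⌋`, `s = t - 1 - r`: the disjoint union of `G_{t-1}(u; u_1, …, u_r)`,
`G_{s-1}(v; v_1, …, v_s)` and `G_{r-1}(w; w_1, …, w_{t-2})`, joining `u` to
`v, v_1, …, v_s` and `v` to `w, w_1, …, w_{t-2}`. -/
def HtRel (t : ℕ) : HtV t → HtV t → Prop := fun a b =>
  match a, b with
  | Sum.inl x, Sum.inl y => GRel _ _ x y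
  | Sum.inr (Sum.inl x), Sum.inr (Sum.inl y) => GRel _ _ x y
  | Sum.inr (Sum.inr x), Sum.inr (Sum.inr y) => GRel _ _ x y
  | Sum.inl (Sum.inl _), Sum.inr (Sum.inl (Sum.inl _)) => True
  | Sum.inl (Sum.inl _), Sum.inr (Sum.inl (Sum.inr (Sum.inl _))) => True
  | Sum.inr (Sum.inl (Sum.inl _)), Sum.inr (Sum.inr (Sum.inl _)) => True
  | Sum.inr (Sum.inl (Sum.inl _)), Sum.inr (Sum.inr (Sum.inr (Sum.inl _))) => True
  | _, _ => False

/-- The graph `H_t`. -/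
def Ht (t : ℕ) : SimpleGraph (HtV t) := SimpleGraph.fromRel (HtRel t)


/-! ### Auxiliary lemmas -/

section Aux

open SimpleGraph

lemma bootSeq_mono {W V : Type*} (H : SimpleGraph W) (G : SimpleGraph V) :
    Monotone (bootSeq H G) := by
  apply monotone_nat_of_le_succ
  intro n x y hxy
  exact Or.inl hxy

lemma bootSeq_le_closure {W V : Type*} (H : SimpleGraph W) (G : SimpleGraph V) (n : ℕ) :
    bootSeq H G n ≤ bootClosure H G := le_iSup _ n

lemma closure_adj_iff {W V : Type*} (H : SimpleGraph W) (G : SimpleGraph V) (x y : V) :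
    (bootClosure H G).Adj x y ↔ ∃ n, (bootSeq H G n).Adj x y :=
  SimpleGraph.iSup_adj

lemma adj_closure_of_adj {W V : Type*} (H : SimpleGraph W) (G : SimpleGraph V) {x y : V}
    (h : G.Adj x y) : (bootClosure H G).Adj x y :=
  bootSeq_le_closure H G 0 h

/-- The witness map for the copying lemma. -/
def pairf {V : Type*} (t : ℕ) (x x' z : V) (c : Fin (t - 1) → V) : Fin 2 ⊕ Fin t → V
  | Sum.inl i => if i = 0 then x else x'
  | Sum.inr j => if h : (j : ℕ) < t - 1 then c ⟨j, h⟩ else z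

lemma pairf_inl {V : Type*} (t : ℕ) (x x' z : V) (c : Fin (t - 1) → V) (i : Fin 2) :
    pairf t x x' z c (Sum.inl i) = if i = 0 then x else x' := rfl

lemma pairf_inr {V : Type*} (t : ℕ) (x x' z : V) (c : Fin (t - 1) → V) (j : Fin t) :
    pairf t x x' z c (Sum.inr j) = if h : (j : ℕ) < t - 1 then c ⟨j, h⟩ else z := rfl

/-- The key "copying" lemma: if `x` and `x'` have `t-1` common neighbours in the
closure and `x'` is adjacent to `z`, then `x` is adjacent to `z` in the closure. -/
lemma copy_lemma {V : Type*} (G : SimpleGraph V) (t : ℕ) (ht : 1 ≤ t)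
    (x x' z : V) (c : Fin (t - 1) → V) (hc : Function.Injective c)
    (hxz : x ≠ z) (hcz : ∀ i, c i ≠ z)
    (hxc : ∀ i, (bootClosure (completeBipartiteGraph (Fin 2) (Fin t)) G).Adj x (c i))
    (hx'c : ∀ i, (bootClosure (completeBipartiteGraph (Fin 2) (Fin t)) G).Adj x' (c i))
    (hx'z : (bootClosure (completeBipartiteGraph (Fin 2) (Fin t)) G).Adj x' z) :
    (bootClosure (completeBipartiteGraph (Fin 2) (Fin t)) G).Adj x z := by
  set K := completeBipartiteGraph (Fin 2) (Fin t) with hK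
  by_cases h0 : (bootClosure K G).Adj x z
  · exact h0
  by_cases hxx' : x = x'
  · exact absurd (hxx' ▸ hx'z) h0
  choose n1 hn1 using fun i => (closure_adj_iff K G x (c i)).mp (hxc i)
  choose n2 hn2 using fun i => (closure_adj_iff K G x' (c i)).mp (hx'c i)
  obtain ⟨n3, hn3⟩ := (closure_adj_iff K G x' z).mp hx'z
  obtain ⟨N, hN1, hN2, hN3⟩ :
      ∃ N, (∀ i, n1 i ≤ N) ∧ (∀ i, n2 i ≤ N) ∧ n3 ≤ N :=
    ⟨(Finset.univ.sup n1) ⊔ (Finset.univ.sup n2) ⊔ n3,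
      fun i => le_sup_of_le_left (le_sup_of_le_left (Finset.le_sup (Finset.mem_univ i))),
      fun i => le_sup_of_le_left (le_sup_of_le_right (Finset.le_sup (Finset.mem_univ i))),
      le_sup_right⟩
  have hm1 : ∀ i, (bootSeq K G N).Adj x (c i) := fun i => bootSeq_mono K G (hN1 i) (hn1 i)
  have hm2 : ∀ i, (bootSeq K G N).Adj x' (c i) := fun i => bootSeq_mono K G (hN2 i) (hn2 i)
  have hm3 : (bootSeq K G N).Adj x' z := bootSeq_mono K G hN3 hn3
  clear hn1 hn2 hn3 hN1 hN2 hN3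
  have hx'z' : x' ≠ z := hx'z.ne
  have hxc' : ∀ i, x ≠ c i := fun i => (hxc i).ne
  have hx'c' : ∀ i, x' ≠ c i := fun i => (hx'c i).ne
  clear hxc hx'c hx'z
  have ht1 : t - 1 < t := by omega
  set f : Fin 2 ⊕ Fin t → V := pairf t x x' z c with hf
  have hone : ((1 : Fin 2) = 0) = False := by simp
  have hfinj : Function.Injective f := by
    intro a b hab
    rcases a with i | j <;> rcases b with i' | j' <;>
      rw [hf] at hab
    · by_cases h1 : i = 0 <;> by_cases h2 : i' = 0 <;>
        rw [pairf_inl, pairf_inl] at hab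
      · rw [h1, h2]
      · rw [if_pos h1, if_neg h2] at hab; exact absurd hab hxx'
      · rw [if_neg h1, if_pos h2] at hab; exact absurd hab.symm hxx'
      · have e1 : (i : ℕ) ≠ 0 := fun h => h1 (Fin.ext h)
        have e2 : (i' : ℕ) ≠ 0 := fun h => h2 (Fin.ext h)
        have := i.2; have := i'.2
        congr 1; exact Fin.ext (by omega)
    · exfalso
      rw [pairf_inl, pairf_inr] at hab
      by_cases h1 : i = 0 <;> by_cases h2 : (j' : ℕ) < t - 1
      · rw [if_pos h1, dif_pos h2] at hab; exact hxc' _ hab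
      · rw [if_pos h1, dif_neg h2] at hab; exact hxz hab
      · rw [if_neg h1, dif_pos h2] at hab; exact hx'c' _ hab
      · rw [if_neg h1, dif_neg h2] at hab; exact hx'z' hab
    · exfalso
      rw [pairf_inr, pairf_inl] at hab
      by_cases h1 : i' = 0 <;> by_cases h2 : (j : ℕ) < t - 1
      · rw [if_pos h1, dif_pos h2] at hab; exact hxc' _ hab.symm
      · rw [if_pos h1, dif_neg h2] at hab; exact hxz hab.symm
      · rw [if_neg h1, dif_pos h2] at hab; exact hx'c' _ hab.symm
      · rw [if_neg h1, dif_neg h2] at hab; exact hx'z' hab.symm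
    · rw [pairf_inr, pairf_inr] at hab
      by_cases h1 : (j : ℕ) < t - 1 <;> by_cases h2 : (j' : ℕ) < t - 1
      · rw [dif_pos h1, dif_pos h2] at hab
        have := congrArg Fin.val (hc hab)
        congr 1; exact Fin.ext this
      · rw [dif_pos h1, dif_neg h2] at hab
        exact absurd hab (hcz _)
      · rw [dif_neg h1, dif_pos h2] at hab
        exact absurd hab.symm (hcz _)
      · have := j.2; have := j'.2
        congr 1; exact Fin.ext (by omega)
  have hnadj : ¬ (bootSeq K G N).Adj x z := fun h => h0 (bootSeq_le_closure K G N h)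
  have hfx : f (Sum.inl 0) = x := by rw [hf, pairf_inl, if_pos rfl]
  have hfz : f (Sum.inr ⟨t - 1, ht1⟩) = z := by
    rw [hf, pairf_inr, dif_neg (by simp)]
  have hcreate : CreatesCopy K (bootSeq K G N) x z := by
    refine ⟨f, hfinj, ?_, Sum.inl 0, Sum.inr ⟨t - 1, ht1⟩, Or.inl ⟨rfl, rfl⟩,
      Or.inl ⟨hfx, hfz⟩⟩
    intro a b hab
    rcases a with i | j <;> rcases b with i' | j'
    · exact absurd hab (by rw [hK]; simp [completeBipartiteGraph])
    · rw [hf, pairf_inl, pairf_inr]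
      by_cases h1 : i = 0 <;> by_cases h2 : (j' : ℕ) < t - 1
      · rw [if_pos h1, dif_pos h2]; exact Or.inl (hm1 _)
      · rw [if_pos h1, dif_neg h2]; exact Or.inr (Or.inl ⟨rfl, rfl⟩)
      · rw [if_neg h1, dif_pos h2]; exact Or.inl (hm2 _)
      · rw [if_neg h1, dif_neg h2]; exact Or.inl hm3
    · rw [hf, pairf_inr, pairf_inl]
      by_cases h1 : i' = 0 <;> by_cases h2 : (j : ℕ) < t - 1
      · rw [if_pos h1, dif_pos h2]; exact Or.inl (hm1 _).symm
      · rw [if_pos h1, dif_neg h2]; exact Or.inr (Or.inr ⟨rfl, rfl⟩)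
      · rw [if_neg h1, dif_pos h2]; exact Or.inl (hm2 _).symm
      · rw [if_neg h1, dif_neg h2]; exact Or.inl hm3.symm
    · exact absurd hab (by rw [hK]; simp [completeBipartiteGraph])
  have hstep : (bootSeq K G (N + 1)).Adj x z := Or.inr ⟨hnadj, hxz, hcreate⟩
  exact bootSeq_le_closure K G (N + 1) hstep

/-- Transferring the bootstrap closure along an injective graph homomorphism. -/
lemma closure_map {W V' V : Type*} (H : SimpleGraph W) (f : V' → V)
    (hf : Function.Injective f) {G' : SimpleGraph V'} {G : SimpleGraph V}
    (hmap : ∀ ⦃a b : V'⦄, G'.Adj a b → G.Adj (f a) (f b)) :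
    ∀ ⦃a b : V'⦄, (bootClosure H G').Adj a b → (bootClosure H G).Adj (f a) (f b) := by
  suffices h : ∀ n, ∀ a b : V', (bootSeq H G' n).Adj a b → (bootSeq H G n).Adj (f a) (f b) by
    intro a b hab
    rw [bootClosure, SimpleGraph.iSup_adj] at hab ⊢
    obtain ⟨n, hn⟩ := hab
    exact ⟨n, h n _ _ hn⟩
  intro n
  induction n with
  | zero => exact fun a b hab => hmap hab
  | succ n ih =>
    intro a b hab
    rcases hab with hab | ⟨hn, hne, g, hg, hmapg, a0, b0, hab0, hor⟩
    · exact Or.inl (ih _ _ hab)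
    · by_cases hadj : (bootSeq H G n).Adj (f a) (f b)
      · exact Or.inl hadj
      · refine Or.inr ⟨hadj, fun e => hne (hf e), f ∘ g, hf.comp hg, ?_, a0, b0, hab0, ?_⟩
        · intro p q hpq
          rcases hmapg hpq with h1 | h1 | h1
          · exact Or.inl (ih _ _ h1)
          · exact Or.inr (Or.inl ⟨congrArg f h1.1, congrArg f h1.2⟩)
          · exact Or.inr (Or.inr ⟨congrArg f h1.1, congrArg f h1.2⟩)
        · rcases hor with ⟨e1, e2⟩ | ⟨e1, e2⟩
          · exact Or.inl ⟨congrArg f e1, congrArg f e2⟩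
          · exact Or.inr ⟨congrArg f e1, congrArg f e2⟩

/-! ### Named vertices of `Ht` -/

def uu (t : ℕ) : HtV t := Sum.inl (Sum.inl ())
def ui (t : ℕ) (i : Fin (htr t)) : HtV t := Sum.inl (Sum.inr (Sum.inl i))
def up (t : ℕ) (i : Fin (htr t)) (j : Fin (t - 1)) : HtV t := Sum.inl (Sum.inr (Sum.inr (i, j)))
def vv (t : ℕ) : HtV t := Sum.inr (Sum.inl (Sum.inl ()))
def vi (t : ℕ) (i : Fin (hts t)) : HtV t := Sum.inr (Sum.inl (Sum.inr (Sum.inl i)))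
def vp (t : ℕ) (i : Fin (hts t)) (j : Fin (hts t - 1)) : HtV t :=
  Sum.inr (Sum.inl (Sum.inr (Sum.inr (i, j))))
def ww (t : ℕ) : HtV t := Sum.inr (Sum.inr (Sum.inl ()))
def wi (t : ℕ) (j : Fin (t - 2)) : HtV t := Sum.inr (Sum.inr (Sum.inr (Sum.inl j)))
def wp (t : ℕ) (j : Fin (t - 2)) (m : Fin (htr t - 1)) : HtV t :=
  Sum.inr (Sum.inr (Sum.inr (Sum.inr (j, m))))

lemma ht_adj {t : ℕ} {a b : HtV t} (hne : a ≠ b) (h : HtRel t a b ∨ HtRel t b a) :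
    (Ht t).Adj a b := by
  rw [Ht, SimpleGraph.fromRel_adj]
  exact ⟨hne, h⟩

/-- The `K_{2,t}`-bootstrap closure of `Ht`. -/
def Cl (t : ℕ) : SimpleGraph (HtV t) :=
  bootClosure (completeBipartiteGraph (Fin 2) (Fin t)) (Ht t)

section Main

variable {t : ℕ}

lemma iu_up (i : Fin (htr t)) (j : Fin (t - 1)) : (Cl t).Adj (uu t) (up t i j) :=
  adj_closure_of_adj _ _ (ht_adj (by simp [uu, up]) (Or.inl trivial))

lemma iui_up (i : Fin (htr t)) (j : Fin (t - 1)) : (Cl t).Adj (ui t i) (up t i j) :=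
  adj_closure_of_adj _ _ (ht_adj (by simp [ui, up]) (Or.inl rfl))

lemma iu_v : (Cl t).Adj (uu t) (vv t) :=
  adj_closure_of_adj _ _ (ht_adj (by simp [uu, vv]) (Or.inl trivial))

lemma iu_vi (k : Fin (hts t)) : (Cl t).Adj (uu t) (vi t k) :=
  adj_closure_of_adj _ _ (ht_adj (by simp [uu, vi]) (Or.inl trivial))

lemma iv_vp (i : Fin (hts t)) (j : Fin (hts t - 1)) : (Cl t).Adj (vv t) (vp t i j) :=
  adj_closure_of_adj _ _ (ht_adj (by simp [vv, vp]) (Or.inl trivial))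

lemma ivi_vp (i : Fin (hts t)) (j : Fin (hts t - 1)) : (Cl t).Adj (vi t i) (vp t i j) :=
  adj_closure_of_adj _ _ (ht_adj (by simp [vi, vp]) (Or.inl rfl))

lemma iv_w : (Cl t).Adj (vv t) (ww t) :=
  adj_closure_of_adj _ _ (ht_adj (by simp [vv, ww]) (Or.inl trivial))

lemma iv_wi (j : Fin (t - 2)) : (Cl t).Adj (vv t) (wi t j) :=
  adj_closure_of_adj _ _ (ht_adj (by simp [vv, wi]) (Or.inl trivial))

lemma iw_wp (j : Fin (t - 2)) (m : Fin (htr t - 1)) : (Cl t).Adj (ww t) (wp t j m) :=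
  adj_closure_of_adj _ _ (ht_adj (by simp [ww, wp]) (Or.inl trivial))

lemma iwi_wp (j : Fin (t - 2)) (m : Fin (htr t - 1)) : (Cl t).Adj (wi t j) (wp t j m) :=
  adj_closure_of_adj _ _ (ht_adj (by simp [wi, wp]) (Or.inl rfl))

variable (ht : 4 ≤ t)
include ht

lemma hrs_eq : htr t + hts t = t - 1 := by simp only [hts, htr]; omega
lemma hr_pos : 1 ≤ htr t := by simp only [htr]; omega
lemma hs_pos : 1 ≤ hts t := by simp only [hts, htr]; omega

/-- Step 1: each `u_i` copies the neighbours of `u`. -/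
lemma step1 (i : Fin (htr t)) (z : HtV t) (hz : (Cl t).Adj (uu t) z)
    (hz2 : ∀ j, z ≠ up t i j) (hxz : ui t i ≠ z) : (Cl t).Adj (ui t i) z := by
  refine copy_lemma (Ht t) t (by omega) (ui t i) (uu t) z (fun j => up t i j) ?_ hxz
    (fun j h => hz2 j h.symm) (fun j => iui_up i j) (fun j => iu_up i j) hz
  intro a b hab
  simpa [up, Prod.ext_iff, Fin.ext_iff] using hab

lemma d1v (i : Fin (htr t)) : (Cl t).Adj (ui t i) (vv t) :=
  step1 ht i _ iu_v (fun j => by simp [vv, up]) (by simp [ui, vv])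

lemma d1vi (i : Fin (htr t)) (k : Fin (hts t)) : (Cl t).Adj (ui t i) (vi t k) :=
  step1 ht i _ (iu_vi k) (fun j => by simp [vi, up]) (by simp [ui, vi])

/-- Step 2: each `v_i` copies the neighbours of `v`. -/
lemma step2 (i : Fin (hts t)) (z : HtV t) (hz : (Cl t).Adj (vv t) z)
    (hz1 : ∀ x, z ≠ Sum.inl x) (hz2 : ∀ j, z ≠ vp t i j) (hxz : vi t i ≠ z) :
    (Cl t).Adj (vi t i) z := by
  have hrs := hrs_eq ht
  have hr1 := hr_pos ht
  set c : Fin (t - 1) → HtV t := fun k =>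
    if h0 : (k : ℕ) = 0 then uu t
    else if h1 : (k : ℕ) ≤ htr t then ui t ⟨(k : ℕ) - 1, by omega⟩
    else vp t i ⟨(k : ℕ) - 1 - htr t, by have := k.2; omega⟩ with hcdef
  have hcval : ∀ k : Fin (t - 1),
      (c k = uu t) ∨ (∃ a, c k = ui t a) ∨ (∃ b, c k = vp t i b) := by
    intro k
    simp only [hcdef]
    split
    · exact Or.inl rfl
    split
    · exact Or.inr (Or.inl ⟨_, rfl⟩)
    · exact Or.inr (Or.inr ⟨_, rfl⟩)
  set idx : HtV t → ℕ := fun v =>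
    match v with
    | Sum.inl (Sum.inl _) => 0
    | Sum.inl (Sum.inr (Sum.inl a)) => (a : ℕ) + 1
    | Sum.inr (Sum.inl (Sum.inr (Sum.inr (_, b)))) => (b : ℕ) + 1 + htr t
    | _ => 0 with hidx
  have key : ∀ k : Fin (t - 1), idx (c k) = (k : ℕ) := by
    intro k
    simp only [hcdef]
    split
    · next h0 => show 0 = (k : ℕ); omega
    split
    · next h0 h1 => show (k : ℕ) - 1 + 1 = (k : ℕ); omega
    · next h0 h1 => show (k : ℕ) - 1 - htr t + 1 + htr t = (k : ℕ); omega
  refine copy_lemma (Ht t) t (by omega) (vi t i) (vv t) z c ?_ hxz ?_ ?_ ?_ hz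
  · intro a b hab
    have h2 := congrArg idx hab
    rw [key a, key b] at h2
    exact Fin.ext h2
  · intro k
    rcases hcval k with h | ⟨a, h⟩ | ⟨b, h⟩ <;> rw [h]
    · exact fun e => hz1 _ e.symm
    · exact fun e => hz1 _ e.symm
    · exact fun e => hz2 _ e.symm
  · intro k
    rcases hcval k with h | ⟨a, h⟩ | ⟨b, h⟩ <;> rw [h]
    · exact (iu_vi i).symm
    · exact (d1vi ht a i).symm
    · exact ivi_vp i b
  · intro k
    rcases hcval k with h | ⟨a, h⟩ | ⟨b, h⟩ <;> rw [h]
    · exact iu_v.symm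
    · exact (d1v ht a).symm
    · exact iv_vp i b

lemma d2w (i : Fin (hts t)) : (Cl t).Adj (vi t i) (ww t) :=
  step2 ht i _ iv_w (fun x => by simp [ww]) (fun j => by simp [ww, vp]) (by simp [vi, ww])

lemma d2wi (i : Fin (hts t)) (j : Fin (t - 2)) : (Cl t).Adj (vi t i) (wi t j) :=
  step2 ht i _ (iv_wi j) (fun x => by simp [wi]) (fun m => by simp [wi, vp]) (by simp [vi, wi])

/-- Step 3: each `w_j` copies the neighbours of `w`, in particular all part vertices. -/
lemma d3 (j k : Fin (t - 2)) (m : Fin (htr t - 1)) : (Cl t).Adj (wi t j) (wp t k m) := by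
  by_cases hkj : k = j
  · subst hkj; exact iwi_wp k m
  have hrs := hrs_eq ht
  have hs1 := hs_pos ht
  have hr1 := hr_pos ht
  set c : Fin (t - 1) → HtV t := fun k' =>
    if h0 : (k' : ℕ) = 0 then vv t
    else if h1 : (k' : ℕ) ≤ hts t then vi t ⟨(k' : ℕ) - 1, by omega⟩
    else wp t j ⟨(k' : ℕ) - 1 - hts t, by have := k'.2; omega⟩ with hcdef
  have hcval : ∀ k' : Fin (t - 1),
      (c k' = vv t) ∨ (∃ a, c k' = vi t a) ∨ (∃ b, c k' = wp t j b) := by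
    intro k'
    simp only [hcdef]
    split
    · exact Or.inl rfl
    split
    · exact Or.inr (Or.inl ⟨_, rfl⟩)
    · exact Or.inr (Or.inr ⟨_, rfl⟩)
  set idx : HtV t → ℕ := fun v =>
    match v with
    | Sum.inr (Sum.inl (Sum.inl _)) => 0
    | Sum.inr (Sum.inl (Sum.inr (Sum.inl a))) => (a : ℕ) + 1
    | Sum.inr (Sum.inr (Sum.inr (Sum.inr (_, b)))) => (b : ℕ) + 1 + hts t
    | _ => 0 with hidx
  have key : ∀ k' : Fin (t - 1), idx (c k') = (k' : ℕ) := by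
    intro k'
    simp only [hcdef]
    split
    · next h0 => show 0 = (k' : ℕ); omega
    split
    · next h0 h1 => show (k' : ℕ) - 1 + 1 = (k' : ℕ); omega
    · next h0 h1 => show (k' : ℕ) - 1 - hts t + 1 + hts t = (k' : ℕ); omega
  refine copy_lemma (Ht t) t (by omega) (wi t j) (ww t) (wp t k m) c ?_ (by simp [wi, wp])
    ?_ ?_ ?_ (iw_wp k m)
  · intro a b hab
    have h2 := congrArg idx hab
    rw [key a, key b] at h2
    exact Fin.ext h2
  · intro k'
    rcases hcval k' with h | ⟨a, h⟩ | ⟨b, h⟩ <;> rw [h]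
    · simp [vv, wp]
    · simp [vi, wp]
    · simp only [wp, ne_eq, Sum.inr.injEq, Prod.mk.injEq, not_and]
      intro hj
      exact absurd hj.symm hkj
  · intro k'
    rcases hcval k' with h | ⟨a, h⟩ | ⟨b, h⟩ <;> rw [h]
    · exact (iv_wi j).symm
    · exact (d2wi ht a j).symm
    · exact iwi_wp j b
  · intro k'
    rcases hcval k' with h | ⟨a, h⟩ | ⟨b, h⟩ <;> rw [h]
    · exact iv_w.symm
    · exact (d2w ht a).symm
    · exact iw_wp j b

/-- The main combinatorial lemma: the closure of `Ht` contains `K_{t-1,t-1}`. -/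
lemma main_ht : HasCopy (completeBipartiteGraph (Fin (t - 1)) (Fin (t - 1))) (Cl t) := by
  have hrs := hrs_eq ht
  have hs1 := hs_pos ht
  have hr1 := hr_pos ht
  have ht2 : 0 < t - 2 := by omega
  set gX : Fin (t - 1) → HtV t := fun k =>
    if h0 : (k : ℕ) = 0 then ww t else wi t ⟨(k : ℕ) - 1, by have := k.2; omega⟩ with hgX
  set gY : Fin (t - 1) → HtV t := fun k =>
    if h0 : (k : ℕ) = 0 then vv t
    else if h1 : (k : ℕ) ≤ hts t then vi t ⟨(k : ℕ) - 1, by omega⟩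
    else wp t ⟨0, ht2⟩ ⟨(k : ℕ) - 1 - hts t, by have := k.2; omega⟩ with hgY
  set idxX : HtV t → ℕ := fun v =>
    match v with
    | Sum.inr (Sum.inr (Sum.inl _)) => 0
    | Sum.inr (Sum.inr (Sum.inr (Sum.inl a))) => (a : ℕ) + 1
    | _ => 0 with hidxX
  set idxY : HtV t → ℕ := fun v =>
    match v with
    | Sum.inr (Sum.inl (Sum.inl _)) => 0
    | Sum.inr (Sum.inl (Sum.inr (Sum.inl a))) => (a : ℕ) + 1
    | Sum.inr (Sum.inr (Sum.inr (Sum.inr (_, b)))) => (b : ℕ) + 1 + hts t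
    | _ => 0 with hidxY
  have hXval : ∀ k, (gX k = ww t) ∨ (∃ a, gX k = wi t a) := by
    intro k; simp only [hgX]; split
    · exact Or.inl rfl
    · exact Or.inr ⟨_, rfl⟩
  have hYval : ∀ k, (gY k = vv t) ∨ (∃ a, gY k = vi t a) ∨ (∃ b, gY k = wp t ⟨0, ht2⟩ b) := by
    intro k; simp only [hgY]; split
    · exact Or.inl rfl
    split
    · exact Or.inr (Or.inl ⟨_, rfl⟩)
    · exact Or.inr (Or.inr ⟨_, rfl⟩)
  have hadjXY : ∀ k k', (Cl t).Adj (gX k) (gY k') := by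
    intro k k'
    rcases hXval k with h | ⟨a, h⟩ <;> rcases hYval k' with h' | ⟨b, h'⟩ | ⟨b, h'⟩ <;>
      rw [h, h']
    · exact iv_w.symm
    · exact (d2w ht b).symm
    · exact iw_wp _ _
    · exact (iv_wi a).symm
    · exact (d2wi ht b a).symm
    · exact d3 ht a _ b
  refine ⟨Sum.elim gX gY, ?_, ?_⟩
  · intro a b hab
    rcases a with k | k <;> rcases b with k' | k' <;>
      simp only [Sum.elim_inl, Sum.elim_inr] at hab
    · congr 1
      have key : ∀ k'' : Fin (t - 1), idxX (gX k'') = (k'' : ℕ) := by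
        intro k''
        simp only [hgX]
        split
        · next h0 => show 0 = (k'' : ℕ); omega
        · next h0 => show (k'' : ℕ) - 1 + 1 = (k'' : ℕ); omega
      have h2 := congrArg idxX hab
      rw [key k, key k'] at h2
      exact Fin.ext h2
    · exact absurd hab ((hadjXY k k').ne)
    · exact absurd hab.symm ((hadjXY k' k).ne)
    · congr 1
      have key : ∀ k'' : Fin (t - 1), idxY (gY k'') = (k'' : ℕ) := by
        intro k''
        simp only [hgY]
        split
        · next h0 => show 0 = (k'' : ℕ); omega
        split
        · next h0 h1 => show (k'' : ℕ) - 1 + 1 = (k'' : ℕ); omega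
        · next h0 h1 => show (k'' : ℕ) - 1 - hts t + 1 + hts t = (k'' : ℕ); omega
      have h2 := congrArg idxY hab
      rw [key k, key k'] at h2
      exact Fin.ext h2
  · intro a b hab
    rcases a with k | k <;> rcases b with k' | k'
    · simp [completeBipartiteGraph] at hab
    · exact hadjXY k k'
    · exact (hadjXY k' k).symm
    · simp [completeBipartiteGraph] at hab

end Main

end Aux

theorem stmt_8 {V : Type*} [Fintype V] (t : ℕ) (ht : 4 ≤ t) (G : SimpleGraph V)
    (h : HasCopy (Ht t) G) :
    HasCopy (completeBipartiteGraph (Fin (t - 1)) (Fin (t - 1)))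
      (bootClosure (completeBipartiteGraph (Fin 2) (Fin t)) G) := by
  obtain ⟨f, hfinj, hfmap⟩ := h
  obtain ⟨g, hginj, hgmap⟩ := main_ht ht
  refine ⟨f ∘ g, hfinj.comp hginj, fun a b hab => ?_⟩
  have := hgmap hab
  rw [Cl] at this
  exact closure_map _ f hfinj hfmap this
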